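/- For all integers k, r ≥ 2, there exists an r-coloring of {1, 2, …, k^r − 1} with no monochromatic solution to 1/x₁ + ⋯ + 1/x_k = 1/y. Hence f_r(k) ≥ k^r. -/

import Mathlib

theorem stmt_9 (k r : ℕ) (hk : 2 ≤ k) (hr : 2 ≤ r) :
    ∃ Δ : ℕ → Fin r, ¬ ∃ (x : Fin k → ℕ) (y : ℕ),
      (∀ i, x i ∈ Finset.Icc 1 (k^r - 1)) ∧ y ∈ Finset.Icc 1 (k^r - 1) ∧
      (∀ i, Δ (x i) = Δ y) ∧ ∑ i, ((x i : ℚ))⁻¹ = ((y : ℚ))⁻¹ := by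
  refine ⟨fun x => ⟨Nat.log k x % r, Nat.mod_lt _ (by omega)⟩, ?_⟩
  rintro ⟨x, y, hx, hy, hc, hsum⟩
  have hk1 : 1 < k := hk
  have hkpos : (0:ℚ) < (k:ℚ) := by exact_mod_cast Nat.lt_of_lt_of_le Nat.zero_lt_two hk
  obtain ⟨hy1, hy2⟩ := Finset.mem_Icc.mp hy
  have hkr : 0 < k ^ r := pow_pos (by omega) r
  have hylt : y < k ^ r := by omega
  have hylog : Nat.log k y < r := Nat.log_lt_of_lt_pow (by omega) hylt
  set i := Nat.log k y with hi
  -- each x j has log equal to i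
  have hlogx : ∀ j, Nat.log k (x j) = i := by
    intro j
    obtain ⟨hxj1, hxj2⟩ := Finset.mem_Icc.mp (hx j)
    have hxlt : x j < k ^ r := by omega
    have hxlog : Nat.log k (x j) < r := Nat.log_lt_of_lt_pow (by omega) hxlt
    have := congrArg Fin.val (hc j)
    simp only [Nat.mod_eq_of_lt hxlog, Nat.mod_eq_of_lt hylog] at this
    exact this.trans (Nat.mod_eq_of_lt hylog)
  -- key inequalities over ℚ
  have hxub : ∀ j, ((x j : ℚ))⁻¹ > ((k:ℚ) ^ (i+1))⁻¹ := by
    intro j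
    obtain ⟨hxj1, _⟩ := Finset.mem_Icc.mp (hx j)
    have hlt : x j < k ^ (i + 1) := by
      have := Nat.lt_pow_succ_log_self hk1 (x j)
      rwa [hlogx j] at this
    have hxpos : (0:ℚ) < (x j : ℚ) := by exact_mod_cast hxj1
    have hltQ : ((x j : ℚ)) < (k:ℚ) ^ (i+1) := by exact_mod_cast hlt
    exact inv_strictAnti₀ hxpos hltQ
  have hylb : ((y : ℚ))⁻¹ ≤ ((k:ℚ) ^ i)⁻¹ := by
    have hle : k ^ i ≤ y := Nat.pow_log_le_self k (by omega)
    have : ((k:ℚ) ^ i) ≤ (y:ℚ) := by exact_mod_cast hle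
    exact inv_anti₀ (pow_pos hkpos i) this
  have hne : (Finset.univ : Finset (Fin k)).Nonempty := by
    have : Nonempty (Fin k) := ⟨⟨0, by omega⟩⟩
    exact Finset.univ_nonempty
  have hsumgt : ∑ j, ((x j : ℚ))⁻¹ > ∑ _j : Fin k, ((k:ℚ) ^ (i+1))⁻¹ :=
    Finset.sum_lt_sum_of_nonempty hne (fun j _ => hxub j)
  have hconst : ∑ _j : Fin k, ((k:ℚ) ^ (i+1))⁻¹ = ((k:ℚ) ^ i)⁻¹ := by
    rw [Finset.sum_const, Finset.card_univ, Fintype.card_fin, nsmul_eq_mul]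
    field_simp
    ring
  rw [hconst, hsum] at hsumgt
  exact absurd hylb (not_le.mpr hsumgt)
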